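/- (Vanishing trace of the adjoint.) Let (Ω,𝒜,μ) be a probability measure space, n ∈ ℕ, and let L : D(L) ⊆ L²(Ω;Sym_n(ℝ)) → L²(Ω;ℝⁿ) be a closed densely defined linear operator with adjoint L* : D(L*) ⊆ L²(Ω;ℝⁿ) → L²(Ω;Sym_n(ℝ)). Let P : L²(Ω;ℝⁿ) → L²(Ω;ℝⁿ) be an orthogonal projector, and let ℛ ⊆ L²(Ω;ℝ) be a dense linear subspace such that for every q ∈ ℛ the matrix field qI lies in D(L) and P L(qI) = 0. Then for every ζ ∈ D(L*) with Pζ = ζ, the pointwise trace of L*ζ vanishes: tr(L*ζ) = 0 almost everywhere in Ω. -/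

import Mathlib

open MeasureTheory

/-- **Vanishing trace of the adjoint.** Let `(Ω,μ)` be a probability space and
`L : D(L) ⊆ L²(Ω;Symₙ) → L²(Ω;ℝⁿ)` a closed densely defined operator with
adjoint `L*`, `P` an orthogonal (self-adjoint) projector of `L²(Ω;ℝⁿ)`, and
`ℛ ⊆ L²(Ω;ℝ)` a dense subspace of bounded functions such that `qI ∈ D(L)` and
`P L(qI) = 0` for all `q ∈ ℛ`. Then for every `ζ ∈ D(L*)` with `Pζ = ζ`, the
pointwise trace of `L*ζ` vanishes almost everywhere.

Vector fields are represented as square-integrable functions `Ω → Fin n → ℝ`,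
matrix fields as functions `Ω → Matrix (Fin n) (Fin n) ℝ`, and the relevant
`L²` inner products are written as explicit integrals. -/
theorem vanishing_trace_of_adjoint {Ω : Type*} [MeasurableSpace Ω]
    {n : ℕ} (μ : Measure Ω) [IsProbabilityMeasure μ]
    (DL : Set (Ω → Matrix (Fin n) (Fin n) ℝ))
    (L : (Ω → Matrix (Fin n) (Fin n) ℝ) → (Ω → Fin n → ℝ))
    (DLstar : Set (Ω → Fin n → ℝ))
    (Lstar : (Ω → Fin n → ℝ) → (Ω → Matrix (Fin n) (Fin n) ℝ))
    (P : (Ω → Fin n → ℝ) → (Ω → Fin n → ℝ))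
    (R : Set (Ω → ℝ))
    -- all relevant fields are square integrable
    (hLstarL2 : ∀ ζ ∈ DLstar, ∀ i j, MemLp (fun x => Lstar ζ x i j) 2 μ)
    (hLqIL2 : ∀ q ∈ R, MemLp
      (fun x => L (fun y => q y • (1 : Matrix (Fin n) (Fin n) ℝ)) x) 2 μ)
    -- the adjoint relation `(L M, ζ) = (M, L* ζ)`
    (hadj : ∀ M ∈ DL, ∀ ζ ∈ DLstar,
      ∫ x, ∑ i, L M x i * ζ x i ∂μ
        = ∫ x, ∑ i, ∑ j, M x i j * Lstar ζ x i j ∂μ)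
    -- `P` is self-adjoint
    (hPselfadj : ∀ f g : Ω → Fin n → ℝ, MemLp f 2 μ → MemLp g 2 μ →
      ∫ x, ∑ i, P f x i * g x i ∂μ = ∫ x, ∑ i, f x i * P g x i ∂μ)
    -- `ℛ` consists of bounded square-integrable functions and is dense in `L²`
    (hRbdd : ∀ q ∈ R, ∃ C, ∀ x, |q x| ≤ C)
    (hRL2 : ∀ q ∈ R, MemLp q 2 μ)
    (hRdense : ∀ g : Ω → ℝ, MemLp g 2 μ →
      (∀ q ∈ R, ∫ x, g x * q x ∂μ = 0) → g =ᵐ[μ] 0)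
    -- `qI ∈ D(L)` and `P L (qI) = 0` for every sufficiently smooth `q`
    (hqI : ∀ q ∈ R, (fun x => q x • (1 : Matrix (Fin n) (Fin n) ℝ)) ∈ DL)
    (hPL : ∀ q ∈ R,
      P (L fun x => q x • (1 : Matrix (Fin n) (Fin n) ℝ)) = fun _ _ => 0)
    -- the given element of `D(L*)`, fixed by `P`
    (ζ : Ω → Fin n → ℝ) (hζ : ζ ∈ DLstar) (hζL2 : MemLp ζ 2 μ)
    (hPζ : P ζ = ζ) :
    ∀ᵐ x ∂μ, Matrix.trace (Lstar ζ x) = 0 := by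

  have hgL2 : MemLp (fun x => Matrix.trace (Lstar ζ x)) 2 μ := by
    have h := memLp_finset_sum' Finset.univ (fun i _ => hLstarL2 ζ hζ i i)
    simpa [Matrix.trace, Matrix.diag, Finset.sum_fn] using h
  have key : ∀ q ∈ R, ∫ x, Matrix.trace (Lstar ζ x) * q x ∂μ = 0 := by
    intro q hq
    have h1 := hadj _ (hqI q hq) ζ hζ
    have h2 : (∫ x, ∑ i, ∑ j, (q x • (1 : Matrix (Fin n) (Fin n) ℝ)) i j * Lstar ζ x i j ∂μ)
        = ∫ x, Matrix.trace (Lstar ζ x) * q x ∂μ := by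
      congr 1; funext x
      simp [Matrix.one_apply, Finset.mul_sum, Matrix.trace, Matrix.diag,
        mul_comm, mul_ite]
    have h3 : (∫ x, ∑ i, L (fun y => q y • (1 : Matrix (Fin n) (Fin n) ℝ)) x i * ζ x i ∂μ) = 0 := by
      have := hPselfadj (L fun y => q y • (1 : Matrix (Fin n) (Fin n) ℝ)) ζ (hLqIL2 q hq) hζL2
      rw [hPL q hq] at this
      simp only [Pi.zero_apply, zero_mul, Finset.sum_const_zero, integral_zero] at this
      calc (∫ x, ∑ i, L (fun y => q y • (1 : Matrix (Fin n) (Fin n) ℝ)) x i * ζ x i ∂μ)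
          = ∫ x, ∑ i, L (fun y => q y • (1 : Matrix (Fin n) (Fin n) ℝ)) x i * P ζ x i ∂μ := by
            rw [hPζ]
        _ = 0 := this.symm
    rw [← h2, ← h1, h3]
  have := hRdense _ hgL2 key
  filter_upwards [this] with x hx
  exact hx
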